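/- Let α > 0. The coefficient array β defined by β_{j,k} = 2^{−j/2} if k < 2^{j/(1+2α)} and β_{j,k} = 0 otherwise is square-summable and satisfies the condition B^{α/(1+2α)}_{2,∞}. -/

import Mathlib

open scoped BigOperators

/-- A coefficient array `β` is square-summable if `Σ_{j,k} β_{j,k}² < ∞`. -/
def SqSummable (β : ℕ → ℕ → ℝ) : Prop :=
  Summable fun j : ℕ => ∑ k ∈ Finset.range (2 ^ j), (β j k) ^ 2

/-- The condition `B^{α/(1+2α)}_{2,∞}`. -/
def CondB2 (β : ℕ → ℕ → ℝ) (α : ℝ) : Prop :=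
  ∃ C : ℝ, ∀ J : ℕ,
    (2 : ℝ) ^ (2 * (J : ℝ) * α / (1 + 2 * α)) *
      ∑' j : ℕ, (if J ≤ j then ∑ k ∈ Finset.range (2 ^ j), (β j k) ^ 2 else 0) ≤ C

/-- the array `β_{j,k} = 2^{−j/2}` for `k < 2^{j/(1+2α)}` and `0`
otherwise is square-summable and satisfies the condition `B^{α/(1+2α)}_{2,∞}`. -/
theorem stmt_13 (α : ℝ) (hα : 0 < α)
    (β : ℕ → ℕ → ℝ)
    (hβdef : ∀ j k : ℕ, β j k =
      if (k : ℝ) < (2 : ℝ) ^ ((j : ℝ) / (1 + 2 * α)) then (2 : ℝ) ^ (-(j : ℝ) / 2)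
      else 0) :
    SqSummable β ∧ CondB2 β α := by
  have h1 : (0:ℝ) < 1 + 2 * α := by linarith
  have hc : (0:ℝ) < 2 * α / (1 + 2 * α) := div_pos (by linarith) h1
  set c : ℝ := 2 * α / (1 + 2 * α) with hcdef
  set r : ℝ := (2:ℝ) ^ (-c) with hrdef
  have hrpos : 0 < r := Real.rpow_pos_of_pos two_pos _
  have hrlt : r < 1 := Real.rpow_lt_one_of_one_lt_of_neg one_lt_two (by linarith)
  -- nonnegativity of partial sums
  have hann : ∀ j : ℕ, 0 ≤ ∑ k ∈ Finset.range (2 ^ j), (β j k) ^ 2 :=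
    fun j => Finset.sum_nonneg fun k _ => sq_nonneg _
  -- key bound
  have hab : ∀ j : ℕ, (∑ k ∈ Finset.range (2 ^ j), (β j k) ^ 2) ≤ 2 * r ^ j := by
    intro j
    set x : ℝ := (2:ℝ) ^ ((j:ℝ) / (1 + 2 * α)) with hxdef
    have hx1 : (1:ℝ) ≤ x := by
      have h0 : (0:ℝ) ≤ (j:ℝ) / (1 + 2 * α) := div_nonneg (Nat.cast_nonneg j) h1.le
      have := Real.rpow_le_rpow_of_exponent_le one_le_two h0
      simpa using this
    have hterm : ∀ k : ℕ, (β j k) ^ 2 =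
        if (k:ℝ) < x then (2:ℝ) ^ (-(j:ℝ)) else 0 := by
      intro k
      rw [hβdef j k]
      split_ifs with h
      · rw [← Real.rpow_natCast ((2:ℝ) ^ (-(j:ℝ)/2)) 2,
          ← Real.rpow_mul (by norm_num : (0:ℝ) ≤ 2)]
        norm_num
      · simp
    have hsum : (∑ k ∈ Finset.range (2 ^ j), (β j k) ^ 2) =
        ((Finset.range (2 ^ j)).filter (fun k : ℕ => (k:ℝ) < x)).card * (2:ℝ) ^ (-(j:ℝ)) := by
      simp only [hterm]
      rw [← Finset.sum_filter, Finset.sum_const, nsmul_eq_mul]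
    have hsub : (Finset.range (2 ^ j)).filter (fun k : ℕ => (k:ℝ) < x) ⊆ Finset.range ⌈x⌉₊ := by
      intro k hk
      simp only [Finset.mem_filter, Finset.mem_range] at hk ⊢
      exact Nat.lt_ceil.mpr hk.2
    have hcard : (((Finset.range (2 ^ j)).filter (fun k : ℕ => (k:ℝ) < x)).card : ℝ) ≤ 2 * x := by
      have h2 : ((Finset.range (2 ^ j)).filter (fun k : ℕ => (k:ℝ) < x)).card ≤ ⌈x⌉₊ := by
        simpa using Finset.card_le_card hsub
      have h3 : (⌈x⌉₊ : ℝ) < x + 1 := Nat.ceil_lt_add_one (by linarith)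
      have h4 : ((Finset.range (2 ^ j)).filter (fun k : ℕ => (k:ℝ) < x)).card ≤ (⌈x⌉₊ : ℝ) := by
        exact_mod_cast h2
      linarith
    have hxr : x * (2:ℝ) ^ (-(j:ℝ)) = r ^ j := by
      rw [hrdef, ← Real.rpow_natCast ((2:ℝ) ^ (-c)) j,
        ← Real.rpow_mul (by norm_num : (0:ℝ) ≤ 2), hxdef,
        ← Real.rpow_add two_pos]
      congr 1
      rw [hcdef]
      field_simp
      ring
    have hp : (0:ℝ) < (2:ℝ) ^ (-(j:ℝ)) := Real.rpow_pos_of_pos two_pos _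
    calc (∑ k ∈ Finset.range (2 ^ j), (β j k) ^ 2)
        = ((Finset.range (2 ^ j)).filter (fun k : ℕ => (k:ℝ) < x)).card * (2:ℝ) ^ (-(j:ℝ)) := hsum
      _ ≤ (2 * x) * (2:ℝ) ^ (-(j:ℝ)) := mul_le_mul_of_nonneg_right hcard hp.le
      _ = 2 * (x * (2:ℝ) ^ (-(j:ℝ))) := by ring
      _ = 2 * r ^ j := by rw [hxr]
  have hgeo : Summable (fun j : ℕ => 2 * r ^ j) :=
    (summable_geometric_of_lt_one hrpos.le hrlt).mul_left 2
  have hsummA : Summable (fun j : ℕ => ∑ k ∈ Finset.range (2 ^ j), (β j k) ^ 2) :=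
    Summable.of_nonneg_of_le hann hab hgeo
  constructor
  · exact hsummA
  · refine ⟨2 * (1 - r)⁻¹, fun J => ?_⟩
    have hfs : Summable (fun j : ℕ =>
        if J ≤ j then ∑ k ∈ Finset.range (2 ^ j), (β j k) ^ 2 else 0) := by
      apply Summable.of_nonneg_of_le (fun j => ?_) (fun j => ?_) hsummA
      · split_ifs; exacts [hann j, le_rfl]
      · split_ifs; exacts [le_rfl, hann j]
    have hgs : Summable (fun j : ℕ => if J ≤ j then 2 * r ^ j else 0) := by
      apply Summable.of_nonneg_of_le (fun j => ?_) (fun j => ?_) hgeo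
      · split_ifs
        · positivity
        · exact le_rfl
      · split_ifs
        · exact le_rfl
        · positivity
    have hfg : ∀ j : ℕ,
        (if J ≤ j then ∑ k ∈ Finset.range (2 ^ j), (β j k) ^ 2 else 0) ≤
        (if J ≤ j then 2 * r ^ j else 0) := by
      intro j; split_ifs; exacts [hab j, le_rfl]
    have htg : (∑' j : ℕ, if J ≤ j then 2 * r ^ j else 0) = 2 * r ^ J * (1 - r)⁻¹ := by
      have h0 := Summable.sum_add_tsum_nat_add (f := fun j : ℕ => if J ≤ j then 2 * r ^ j else 0) J hgs
      have hz : (∑ i ∈ Finset.range J, if J ≤ i then 2 * r ^ i else 0) = 0 :=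
        Finset.sum_eq_zero fun i hi => by
          rw [if_neg (not_le.mpr (Finset.mem_range.mp hi))]
      have h2 : (∑' i : ℕ, if J ≤ i + J then 2 * r ^ (i + J) else 0) =
          ∑' i : ℕ, 2 * r ^ J * r ^ i := by
        congr 1
        funext i
        rw [if_pos (Nat.le_add_left J i), pow_add]
        ring
      rw [← h0, hz, zero_add, h2, tsum_mul_left,
        tsum_geometric_of_lt_one hrpos.le hrlt]
    have hT : (∑' j : ℕ, if J ≤ j then ∑ k ∈ Finset.range (2 ^ j), (β j k) ^ 2 else 0) ≤
        2 * r ^ J * (1 - r)⁻¹ := htg ▸ Summable.tsum_le_tsum hfg hfs hgs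
    have hpow : (2:ℝ) ^ (2 * (J:ℝ) * α / (1 + 2 * α)) * r ^ J = 1 := by
      rw [hrdef, ← Real.rpow_natCast ((2:ℝ) ^ (-c)) J,
        ← Real.rpow_mul (by norm_num : (0:ℝ) ≤ 2), ← Real.rpow_add two_pos]
      rw [show 2 * (J:ℝ) * α / (1 + 2 * α) + -c * (J:ℕ) = 0 by
        rw [hcdef]; field_simp; ring]
      exact Real.rpow_zero 2
    have hPpos : (0:ℝ) < (2:ℝ) ^ (2 * (J:ℝ) * α / (1 + 2 * α)) :=
      Real.rpow_pos_of_pos two_pos _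
    calc (2:ℝ) ^ (2 * (J:ℝ) * α / (1 + 2 * α)) *
          ∑' j : ℕ, (if J ≤ j then ∑ k ∈ Finset.range (2 ^ j), (β j k) ^ 2 else 0)
        ≤ (2:ℝ) ^ (2 * (J:ℝ) * α / (1 + 2 * α)) * (2 * r ^ J * (1 - r)⁻¹) :=
          mul_le_mul_of_nonneg_left hT hPpos.le
      _ = ((2:ℝ) ^ (2 * (J:ℝ) * α / (1 + 2 * α)) * r ^ J) * (2 * (1 - r)⁻¹) := by ring
      _ = 2 * (1 - r)⁻¹ := by rw [hpow, one_mul]
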